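/- For k ≥ 2 and n ≥ 1, the k-regular partition function satisfies the recurrence n · p_k(n) = ∑_{ℓ=1}^{n} g_k(ℓ) · p_k(n − ℓ), where g_k(ℓ) = σ(ℓ) − k·σ(ℓ/k) with σ(x) = 0 when x is not a positive integer, and p_k(0) = 1. -/

import Mathlib

/-- The number of `k`-regular partitions of `n`: partitions of `n` with no part divisible
by `k`. -/
def regularPartitions (k n : ℕ) : ℕ :=
  (Finset.univ.filter fun p : n.Partition => ∀ i ∈ p.parts, ¬ k ∣ i).card

/-- `g_k(ℓ) = σ(ℓ) - k·σ(ℓ/k)`, where `σ` is the sum-of-divisors function and the second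
term is `0` unless `k ∣ ℓ`. -/
def gk (k l : ℕ) : ℤ :=
  (∑ d ∈ l.divisors, (d : ℤ)) - k * (if k ∣ l then ∑ d ∈ (l / k).divisors, (d : ℤ) else 0)

lemma count_ge_card (k n d j : ℕ) (hd : 0 < d) (hkd : ¬ k ∣ d) (hj : 0 < j) (hdj : d * j ≤ n) :
    (Finset.univ.filter fun p : n.Partition =>
      (∀ i ∈ p.parts, ¬ k ∣ i) ∧ j ≤ p.parts.count d).card = regularPartitions k (n - d * j) := by
  classical
  unfold regularPartitions
  refine Finset.card_bij'
    (fun p hp => ⟨p.parts - Multiset.replicate j d, ?_, ?_⟩)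
    (fun q hq => ⟨q.parts + Multiset.replicate j d, ?_, ?_⟩) ?_ ?_ ?_ ?_
  · intro i hi
    exact p.parts_pos (Multiset.mem_of_le (Multiset.sub_le_self _ _) hi)
  · simp only [Finset.mem_filter] at hp
    have hle : Multiset.replicate j d ≤ p.parts :=
      Multiset.le_count_iff_replicate_le.mp hp.2.2
    have := tsub_add_cancel_of_le hle
    have hs : (p.parts - Multiset.replicate j d).sum + (Multiset.replicate j d).sum = n := by
      rw [← Multiset.sum_add, this, p.parts_sum]
    rw [Multiset.sum_replicate, smul_eq_mul, mul_comm j d] at hs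
    omega
  · intro i hi
    rcases Multiset.mem_add.mp hi with h | h
    · exact q.parts_pos h
    · rw [Multiset.eq_of_mem_replicate h]; exact hd
  · have h1 : n - d * j + j * d = n := by rw [mul_comm j d]; omega
    rw [Multiset.sum_add, q.parts_sum, Multiset.sum_replicate, smul_eq_mul, h1]
  · intro p hp
    simp only [Finset.mem_filter, Finset.mem_univ, true_and] at hp ⊢
    intro i hi
    exact hp.1 i (Multiset.mem_of_le (Multiset.sub_le_self _ _) hi)
  · intro q hq
    simp only [Finset.mem_filter, Finset.mem_univ, true_and] at hq ⊢
    constructor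
    · intro i hi
      rcases Multiset.mem_add.mp hi with h | h
      · exact hq i h
      · rw [Multiset.eq_of_mem_replicate h]; exact hkd
    · rw [Multiset.count_add, Multiset.count_replicate_self]; omega
  · intro p hp
    simp only [Finset.mem_filter, Finset.mem_univ, true_and] at hp
    have hle : Multiset.replicate j d ≤ p.parts :=
      Multiset.le_count_iff_replicate_le.mp hp.2
    ext1
    simp [tsub_add_cancel_of_le hle]
  · intro q hq
    ext1
    simp

lemma gk_eq (k l : ℕ) (hk : 2 ≤ k) (hl : 0 < l) :
    gk k l = ∑ d ∈ l.divisors.filter (fun d => ¬ k ∣ d), (d : ℤ) := by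
  classical
  have hk0 : 0 < k := by omega
  unfold gk
  rw [← Finset.sum_filter_add_sum_filter_not l.divisors (fun d => k ∣ d)]
  have hmul : k * (if k ∣ l then ∑ d ∈ (l / k).divisors, (d : ℤ) else 0)
      = ∑ d ∈ l.divisors.filter (fun d => k ∣ d), (d : ℤ) := by
    by_cases hkl : k ∣ l
    · rw [if_pos hkl, Finset.mul_sum]
      refine Finset.sum_nbij' (fun e => k * e) (fun d => d / k) ?_ ?_ ?_ ?_ ?_
      · intro e he
        simp only [Nat.mem_divisors, Finset.mem_filter] at he ⊢
        obtain ⟨he1, he2⟩ := he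
        refine ⟨⟨?_, by omega⟩, Dvd.intro e rfl⟩
        calc k * e ∣ k * (l / k) := mul_dvd_mul_left k he1
          _ = l := Nat.mul_div_cancel' hkl
      · intro d hd
        simp only [Nat.mem_divisors, Finset.mem_filter] at hd ⊢
        obtain ⟨⟨hd1, hd2⟩, hd3⟩ := hd
        obtain ⟨m, rfl⟩ := hd3
        rw [Nat.mul_div_cancel_left m hk0]
        constructor
        · exact Nat.dvd_div_of_mul_dvd hd1
        · rw [Nat.div_ne_zero_iff, and_iff_right (by omega : k ≠ 0)]
          exact Nat.le_of_dvd hl hkl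
      · intro e he; simp [Nat.mul_div_cancel_left e hk0]
      · intro d hd
        simp only [Nat.mem_divisors, Finset.mem_filter] at hd
        exact Nat.mul_div_cancel' hd.2
      · intro e he; push_cast; ring
    · rw [if_neg hkl, mul_zero]
      symm
      refine Finset.sum_eq_zero fun d hd => ?_
      simp only [Finset.mem_filter, Nat.mem_divisors] at hd
      exact absurd (hd.2.trans hd.1.1) hkl
  rw [hmul]
  ring

lemma inner_sum_eq (k n : ℕ) (hk : 2 ≤ k) (p : n.Partition)
    (hp : ∀ i ∈ p.parts, ¬ k ∣ i) :
    ∑ x ∈ ((Finset.Icc 1 n).filter (fun d => ¬ k ∣ d)).sigma (fun d => Finset.Icc 1 (n / d)),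
      (if x.2 ≤ p.parts.count x.1 then (x.1 : ℤ) else 0) = (n : ℤ) := by
  classical
  rw [Finset.sum_sigma]
  have hinner : ∀ d ∈ (Finset.Icc 1 n).filter (fun d => ¬ k ∣ d),
      ∑ j ∈ Finset.Icc 1 (n / d), (if j ≤ p.parts.count d then (d : ℤ) else 0)
        = (p.parts.count d : ℤ) * d := by
    intro d hd
    simp only [Finset.mem_filter, Finset.mem_Icc] at hd
    obtain ⟨⟨hd1, hd2⟩, hkd⟩ := hd
    have hcle : p.parts.count d ≤ n / d := by
      rw [Nat.le_div_iff_mul_le (by omega)]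
      have hrep : Multiset.replicate (p.parts.count d) d ≤ p.parts :=
        Multiset.le_count_iff_replicate_le.mp le_rfl
      obtain ⟨u, hu⟩ := Multiset.le_iff_exists_add.mp hrep
      have hsum : n = p.parts.count d * d + u.sum := by
        conv_lhs => rw [← p.parts_sum, hu]
        rw [Multiset.sum_add, Multiset.sum_replicate, smul_eq_mul]
      omega
    rw [← Finset.sum_filter]
    have hset : (Finset.Icc 1 (n / d)).filter (fun j => j ≤ p.parts.count d)
        = Finset.Icc 1 (p.parts.count d) := by
      ext j
      simp only [Finset.mem_filter, Finset.mem_Icc]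
      omega
    rw [hset, Finset.sum_const, Nat.card_Icc, nsmul_eq_mul]
    push_cast
    ring
  rw [Finset.sum_congr rfl hinner]
  have hnat : ∑ d ∈ (Finset.Icc 1 n).filter (fun d => ¬ k ∣ d), p.parts.count d * d = n := by
    have hmap := Finset.sum_multiset_map_count p.parts (id : ℕ → ℕ)
    rw [Multiset.map_id] at hmap
    have hsub : p.parts.toFinset ⊆ (Finset.Icc 1 n).filter (fun d => ¬ k ∣ d) := by
      intro m hm
      rw [Multiset.mem_toFinset] at hm
      simp only [Finset.mem_filter, Finset.mem_Icc]
      exact ⟨⟨p.parts_pos hm, (Multiset.le_sum_of_mem hm).trans_eq p.parts_sum⟩, hp m hm⟩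
    have h0 : ∀ d ∈ (Finset.Icc 1 n).filter (fun d => ¬ k ∣ d),
        d ∉ p.parts.toFinset → p.parts.count d * d = 0 := fun d _ hd => by
      rw [Multiset.count_eq_zero_of_notMem (by simpa using hd), zero_mul]
    calc ∑ d ∈ (Finset.Icc 1 n).filter (fun d => ¬ k ∣ d), p.parts.count d * d
        = ∑ m ∈ p.parts.toFinset, p.parts.count m * m := (Finset.sum_subset hsub h0).symm
      _ = ∑ m ∈ p.parts.toFinset, p.parts.count m • m := by simp [smul_eq_mul]
      _ = p.parts.sum := hmap.symm
      _ = n := p.parts_sum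
  calc ∑ d ∈ (Finset.Icc 1 n).filter (fun d => ¬ k ∣ d), (p.parts.count d : ℤ) * d
      = ((∑ d ∈ (Finset.Icc 1 n).filter (fun d => ¬ k ∣ d), p.parts.count d * d : ℕ) : ℤ) := by
        push_cast; rfl
    _ = (n : ℤ) := by rw [hnat]

/-- The recurrence `n · p_k(n) = ∑_{ℓ=1}^n g_k(ℓ) p_k(n - ℓ)`. -/
theorem regular_recurrence (k : ℕ) (hk : 2 ≤ k) (n : ℕ) (hn : 1 ≤ n) :
    (n : ℤ) * regularPartitions k n =
      ∑ l ∈ Finset.Icc 1 n, gk k l * regularPartitions k (n - l) := by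
  classical
  -- Step A: rewrite gk as a sum over non-multiples-of-k divisors
  have stepA : ∑ l ∈ Finset.Icc 1 n, gk k l * regularPartitions k (n - l)
      = ∑ x ∈ (Finset.Icc 1 n).sigma (fun l => l.divisors.filter (fun d => ¬ k ∣ d)),
          (x.2 : ℤ) * regularPartitions k (n - x.1) := by
    rw [Finset.sum_sigma]
    refine Finset.sum_congr rfl fun l hl => ?_
    rw [gk_eq k l hk (by simp at hl; omega), Finset.sum_mul]
  -- Step B: reindex (l, d) with d ∣ l  ↦  (d, j) with l = d * j
  have stepB : ∑ x ∈ (Finset.Icc 1 n).sigma (fun l => l.divisors.filter (fun d => ¬ k ∣ d)),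
        (x.2 : ℤ) * regularPartitions k (n - x.1)
      = ∑ x ∈ ((Finset.Icc 1 n).filter (fun d => ¬ k ∣ d)).sigma (fun d => Finset.Icc 1 (n / d)),
          (x.1 : ℤ) * regularPartitions k (n - x.1 * x.2) := by
    refine Finset.sum_nbij' (fun x => ⟨x.2, x.1 / x.2⟩) (fun x => ⟨x.1 * x.2, x.1⟩) ?_ ?_ ?_ ?_ ?_
    · rintro ⟨l, d⟩ hx
      simp only [Finset.mem_sigma, Finset.mem_Icc, Finset.mem_filter, Nat.mem_divisors] at hx ⊢
      obtain ⟨⟨hl1, hl2⟩, ⟨hdl, -⟩, hkd⟩ := hx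
      have hd1 : 1 ≤ d := Nat.pos_of_dvd_of_pos hdl (by omega)
      have hdle : d ≤ l := Nat.le_of_dvd (by omega) hdl
      refine ⟨⟨⟨hd1, hdle.trans hl2⟩, hkd⟩, ?_, Nat.div_le_div_right hl2⟩
      exact Nat.one_le_div_iff (by omega) |>.mpr hdle
    · rintro ⟨d, j⟩ hx
      simp only [Finset.mem_sigma, Finset.mem_Icc, Finset.mem_filter, Nat.mem_divisors] at hx ⊢
      obtain ⟨⟨⟨hd1, hd2⟩, hkd⟩, hj1, hj2⟩ := hx
      have hjd : j * d ≤ n := (Nat.le_div_iff_mul_le (by omega)).mp hj2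
      refine ⟨⟨Nat.mul_pos (by omega) (by omega), by rw [mul_comm]; omega⟩,
        ⟨Dvd.intro j rfl, Nat.mul_ne_zero (by omega) (by omega)⟩, hkd⟩
    · rintro ⟨l, d⟩ hx
      simp only [Finset.mem_sigma, Finset.mem_Icc, Finset.mem_filter, Nat.mem_divisors] at hx
      obtain ⟨-, ⟨hdl, -⟩, -⟩ := hx
      simp [Nat.mul_div_cancel' hdl]
    · rintro ⟨d, j⟩ hx
      simp only [Finset.mem_sigma, Finset.mem_Icc, Finset.mem_filter, Nat.mem_divisors] at hx
      obtain ⟨⟨⟨hd1, -⟩, -⟩, -⟩ := hx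
      simp [Nat.mul_div_cancel_left j (by omega : 0 < d)]
    · rintro ⟨l, d⟩ hx
      simp only [Finset.mem_sigma, Finset.mem_Icc, Finset.mem_filter, Nat.mem_divisors] at hx
      obtain ⟨-, ⟨hdl, -⟩, -⟩ := hx
      simp [Nat.mul_div_cancel' hdl]
  -- Step C/D: replace regularPartitions (n - d*j) by the count of partitions with count d ≥ j
  have stepC : ∑ x ∈ ((Finset.Icc 1 n).filter (fun d => ¬ k ∣ d)).sigma
        (fun d => Finset.Icc 1 (n / d)),
        (x.1 : ℤ) * regularPartitions k (n - x.1 * x.2)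
      = ∑ x ∈ ((Finset.Icc 1 n).filter (fun d => ¬ k ∣ d)).sigma
        (fun d => Finset.Icc 1 (n / d)),
        ∑ p ∈ (Finset.univ.filter fun p : n.Partition => ∀ i ∈ p.parts, ¬ k ∣ i),
          (if x.2 ≤ p.parts.count x.1 then (x.1 : ℤ) else 0) := by
    refine Finset.sum_congr rfl fun x hx => ?_
    obtain ⟨d, j⟩ := x
    simp only [Finset.mem_sigma, Finset.mem_Icc, Finset.mem_filter] at hx
    obtain ⟨⟨⟨hd1, hd2⟩, hkd⟩, hj1, hj2⟩ := hx
    have hjd : j * d ≤ n := (Nat.le_div_iff_mul_le (by omega)).mp hj2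
    rw [← count_ge_card k n d j (by omega) hkd (by omega) (by rw [mul_comm]; omega)]
    rw [← Finset.filter_filter, ← Finset.sum_filter, Finset.sum_const, nsmul_eq_mul, mul_comm]
  rw [stepA, stepB, stepC, Finset.sum_comm]
  -- Now compute the inner sum for each regular partition p : it equals n
  rw [Finset.sum_congr rfl (fun p hp => inner_sum_eq k n hk p (by simpa using hp))]
  rw [Finset.sum_const, nsmul_eq_mul, mul_comm]
  rfl
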